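/- Let φ : ℝ^{n×r} → ℝ be differentiable with L-Lipschitz continuous gradient on ℝ^{n×r}, and set L_n := max_{X ∈ St(n,r)} ‖∇φ(X)‖₂ (spectral norm) and L_G := L + 2L_n. Then the Riemannian gradient is Lipschitz on the Stiefel manifold: for all X, Y ∈ St(n,r), ‖grad φ(X) − grad φ(Y)‖_F ≤ L_G‖X − Y‖_F. -/

import Mathlib

open Matrix
open scoped BigOperators

attribute [local instance] Matrix.frobeniusNormedAddCommGroup Matrix.frobeniusNormedSpace

noncomputable section

/-- the Frobenius norm of a real matrix -/
def frob {n r : ℕ} (A : Matrix (Fin n) (Fin r) ℝ) : ℝ :=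
  Real.sqrt (∑ i, ∑ j, (A i j) ^ 2)

/-- the trace inner product ⟨A,B⟩ = tr(AᵀB) -/
def innerF {n r : ℕ} (A B : Matrix (Fin n) (Fin r) ℝ) : ℝ := (Aᵀ * B).trace

/-- the Stiefel manifold St(n,r) -/
def Stiefel (n r : ℕ) : Set (Matrix (Fin n) (Fin r) ℝ) := {X | Xᵀ * X = 1}

/-- orthogonal projection onto the tangent space at X -/
def projT {n r : ℕ} (X Y : Matrix (Fin n) (Fin r) ℝ) : Matrix (Fin n) (Fin r) ℝ :=
  Y - (1 / 2 : ℝ) • (X * (Xᵀ * Y + Yᵀ * X))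

/-- the spectral norm (operator 2-norm) of a matrix -/
def spec {n r : ℕ} (A : Matrix (Fin n) (Fin r) ℝ) : ℝ :=
  ‖LinearMap.toContinuousLinearMap (Matrix.toEuclideanLin A)‖

/-- the Euclidean gradient of φ : ℝ^{n×r} → ℝ (w.r.t. the trace inner product) -/
def egrad {n r : ℕ} (φ : Matrix (Fin n) (Fin r) ℝ → ℝ) (X : Matrix (Fin n) (Fin r) ℝ) :
    Matrix (Fin n) (Fin r) ℝ :=
  fun i j => fderiv ℝ φ X (Matrix.single i j 1)

/-- the Riemannian gradient on the Stiefel manifold: grad φ(X) = P_{T_X}(∇φ(X)) -/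
def rgrad {n r : ℕ} (φ : Matrix (Fin n) (Fin r) ℝ → ℝ) (X : Matrix (Fin n) (Fin r) ℝ) :
    Matrix (Fin n) (Fin r) ℝ :=
  projT X (egrad φ X)

section Aux
variable {n r m : ℕ}

/-! ### basic facts about `frob` -/

lemma frob_eq_norm (A : Matrix (Fin n) (Fin r) ℝ) : frob A = ‖A‖ := by
  rw [Matrix.frobenius_norm_def, ← Real.sqrt_eq_rpow, frob]
  congr 1
  refine Finset.sum_congr rfl fun i _ => Finset.sum_congr rfl fun j _ => ?_
  rw [show ((2:ℝ)) = ((2:ℕ):ℝ) by norm_num, Real.rpow_natCast, Real.norm_eq_abs, sq_abs]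

lemma frob_nonneg (A : Matrix (Fin n) (Fin r) ℝ) : 0 ≤ frob A := Real.sqrt_nonneg _

lemma frob_transpose (A : Matrix (Fin n) (Fin r) ℝ) : frob Aᵀ = frob A := by
  rw [frob, frob, Finset.sum_comm]; rfl

lemma frob_add_le (A B : Matrix (Fin n) (Fin r) ℝ) : frob (A + B) ≤ frob A + frob B := by
  simp only [frob_eq_norm]; exact norm_add_le _ _

lemma frob_neg (A : Matrix (Fin n) (Fin r) ℝ) : frob (-A) = frob A := by
  simp [frob_eq_norm]

lemma frob_smul (c : ℝ) (A : Matrix (Fin n) (Fin r) ℝ) : frob (c • A) = |c| * frob A := by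
  simp [frob_eq_norm, norm_smul]

/-! ### basic facts about `spec` -/

lemma spec_nonneg (A : Matrix (Fin n) (Fin r) ℝ) : 0 ≤ spec A := norm_nonneg _

lemma euclid_norm {k : ℕ} (w : Fin k → ℝ) :
    ‖((WithLp.equiv 2 (Fin k → ℝ)).symm w : EuclideanSpace ℝ (Fin k))‖
      = Real.sqrt (∑ i, w i ^ 2) := by
  rw [EuclideanSpace.norm_eq]
  congr 1
  refine Finset.sum_congr rfl fun i _ => ?_
  simp [Real.norm_eq_abs, sq_abs]

lemma spec_mulVec (A : Matrix (Fin n) (Fin r) ℝ) (v : Fin r → ℝ) :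
    Real.sqrt (∑ i, (A *ᵥ v) i ^ 2) ≤ spec A * Real.sqrt (∑ j, v j ^ 2) := by
  have h := (LinearMap.toContinuousLinearMap (Matrix.toEuclideanLin A)).le_opNorm
    ((WithLp.equiv 2 (Fin r → ℝ)).symm v)
  simpa [LinearMap.coe_toContinuousLinearMap', Matrix.toEuclideanLin_apply_piLp_toLp,
    euclid_norm, spec, EuclideanSpace.norm_eq, Real.norm_eq_abs, sq_abs] using h

lemma spec_le_bound (A : Matrix (Fin n) (Fin r) ℝ) (c : ℝ) (hc : 0 ≤ c)
    (h : ∀ v : Fin r → ℝ,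
      Real.sqrt (∑ i, (A *ᵥ v) i ^ 2) ≤ c * Real.sqrt (∑ j, v j ^ 2)) :
    spec A ≤ c := by
  apply ContinuousLinearMap.opNorm_le_bound _ hc
  intro x
  have := h ((WithLp.equiv 2 (Fin r → ℝ)) x)
  simpa [LinearMap.coe_toContinuousLinearMap', Matrix.toEuclideanLin_apply,
    euclid_norm, EuclideanSpace.norm_eq, Real.norm_eq_abs, sq_abs] using this

lemma spec_transpose_le (A : Matrix (Fin n) (Fin r) ℝ) : spec Aᵀ ≤ spec A := by
  apply spec_le_bound _ _ (spec_nonneg A)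
  intro v
  set w : Fin r → ℝ := Aᵀ *ᵥ v with hw
  have h2 : v ⬝ᵥ (A *ᵥ w) = w ⬝ᵥ w := by
    rw [Matrix.dotProduct_mulVec, ← Matrix.mulVec_transpose]
  have h3 : v ⬝ᵥ (A *ᵥ w) ≤ Real.sqrt (∑ j, v j ^ 2) * Real.sqrt (∑ i, (A *ᵥ w) i ^ 2) := by
    rw [dotProduct]
    exact Real.sum_mul_le_sqrt_mul_sqrt _ _ _
  have h4 := spec_mulVec A w
  have h5 : w ⬝ᵥ w = ∑ i, w i ^ 2 := by simp [dotProduct, pow_two]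
  set S := Real.sqrt (∑ i, w i ^ 2) with hS
  have hSnn : 0 ≤ S := Real.sqrt_nonneg _
  have hSsq : S ^ 2 = ∑ i, w i ^ 2 := Real.sq_sqrt (by positivity)
  set Q := Real.sqrt (∑ j, v j ^ 2) with hQ
  have hQnn : 0 ≤ Q := Real.sqrt_nonneg _
  have hkey : S ^ 2 ≤ Q * (spec A * S) := by
    calc S ^ 2 = v ⬝ᵥ (A *ᵥ w) := by rw [hSsq, ← h5, h2]
    _ ≤ Q * Real.sqrt (∑ i, (A *ᵥ w) i ^ 2) := h3
    _ ≤ Q * (spec A * S) := mul_le_mul_of_nonneg_left h4 hQnn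
  rcases eq_or_lt_of_le hSnn with h | h
  · rw [← h]; exact mul_nonneg (spec_nonneg A) hQnn
  · nlinarith

lemma spec_stiefel {X : Matrix (Fin n) (Fin r) ℝ} (hX : Xᵀ * X = 1) : spec X ≤ 1 := by
  apply spec_le_bound _ _ zero_le_one
  intro v
  have h : (X *ᵥ v) ⬝ᵥ (X *ᵥ v) = v ⬝ᵥ v := by
    rw [Matrix.dotProduct_mulVec, ← Matrix.mulVec_transpose, Matrix.mulVec_mulVec, hX,
      Matrix.one_mulVec]
  have h1 : ∑ i, (X *ᵥ v) i ^ 2 = ∑ j, v j ^ 2 := by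
    have e1 : (X *ᵥ v) ⬝ᵥ (X *ᵥ v) = ∑ i, (X *ᵥ v) i ^ 2 := by simp [dotProduct, pow_two]
    have e2 : v ⬝ᵥ v = ∑ j, v j ^ 2 := by simp [dotProduct, pow_two]
    rw [← e1, ← e2, h]
  rw [h1, one_mul]

/-! ### mixed Frobenius/spectral norm inequalities -/

lemma frob_mul_le_left (A : Matrix (Fin n) (Fin m) ℝ) (B : Matrix (Fin m) (Fin r) ℝ) :
    frob (A * B) ≤ spec A * frob B := by
  rw [frob, frob]
  have key : ∑ i, ∑ j, ((A * B) i j) ^ 2 ≤ spec A ^ 2 * ∑ i, ∑ j, (B i j) ^ 2 := by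
    rw [Finset.sum_comm]
    have hcol : ∀ j : Fin r, ∑ i, ((A * B) i j) ^ 2 ≤ spec A ^ 2 * ∑ k, (B k j) ^ 2 := by
      intro j
      have hmv : ∀ i, (A * B) i j = (A *ᵥ fun k => B k j) i := by
        intro i; simp [Matrix.mul_apply, Matrix.mulVec, dotProduct]
      have h := spec_mulVec A (fun k => B k j)
      have hnn : (0:ℝ) ≤ ∑ i, (A *ᵥ fun k => B k j) i ^ 2 := by positivity
      have hsq := pow_le_pow_left₀ (Real.sqrt_nonneg _) h 2
      rw [Real.sq_sqrt hnn, mul_pow, Real.sq_sqrt (by positivity)] at hsq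
      calc ∑ i, ((A * B) i j) ^ 2 = ∑ i, (A *ᵥ fun k => B k j) i ^ 2 := by
            refine Finset.sum_congr rfl fun i _ => by rw [hmv i]
        _ ≤ spec A ^ 2 * ∑ k, (B k j) ^ 2 := hsq
    calc ∑ j, ∑ i, ((A * B) i j) ^ 2 ≤ ∑ j, spec A ^ 2 * ∑ k, (B k j) ^ 2 :=
          Finset.sum_le_sum fun j _ => hcol j
      _ = spec A ^ 2 * ∑ j, ∑ k, (B k j) ^ 2 := by rw [Finset.mul_sum]
      _ = spec A ^ 2 * ∑ k, ∑ j, (B k j) ^ 2 := by rw [Finset.sum_comm]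
  calc Real.sqrt (∑ i, ∑ j, ((A * B) i j) ^ 2)
      ≤ Real.sqrt (spec A ^ 2 * ∑ i, ∑ j, (B i j) ^ 2) := Real.sqrt_le_sqrt key
    _ = spec A * Real.sqrt (∑ i, ∑ j, (B i j) ^ 2) := by
        rw [Real.sqrt_mul (sq_nonneg _), Real.sqrt_sq (spec_nonneg A)]

lemma frob_mul_le_right (A : Matrix (Fin n) (Fin m) ℝ) (B : Matrix (Fin m) (Fin r) ℝ) :
    frob (A * B) ≤ frob A * spec B := by
  rw [← frob_transpose (A * B), Matrix.transpose_mul]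
  calc frob (Bᵀ * Aᵀ) ≤ spec Bᵀ * frob Aᵀ := frob_mul_le_left _ _
    _ ≤ spec B * frob A := by
        rw [frob_transpose]
        exact mul_le_mul_of_nonneg_right (spec_transpose_le B) (frob_nonneg A)
    _ = frob A * spec B := mul_comm _ _

/-! ### the tangent-space projection is nonexpansive -/

lemma innerF_self (A : Matrix (Fin n) (Fin r) ℝ) : innerF A A = ∑ i, ∑ j, (A i j) ^ 2 := by
  rw [innerF]
  simp only [Matrix.trace, Matrix.diag_apply, Matrix.mul_apply, Matrix.transpose_apply]
  rw [Finset.sum_comm]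
  simp [pow_two]

lemma frob_eq_sqrt_innerF (A : Matrix (Fin n) (Fin r) ℝ) :
    frob A = Real.sqrt (innerF A A) := by rw [innerF_self, frob]

lemma innerF_self_nonneg (A : Matrix (Fin n) (Fin r) ℝ) : 0 ≤ innerF A A := by
  rw [innerF_self]; positivity

lemma innerF_symm (A B : Matrix (Fin n) (Fin r) ℝ) : innerF A B = innerF B A := by
  rw [innerF, innerF, ← Matrix.trace_transpose, Matrix.transpose_mul, Matrix.transpose_transpose]

lemma innerF_sub_left (A B C : Matrix (Fin n) (Fin r) ℝ) :
    innerF (A - B) C = innerF A C - innerF B C := by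
  simp [innerF, Matrix.transpose_sub, Matrix.sub_mul]

lemma innerF_sub_right (A B C : Matrix (Fin n) (Fin r) ℝ) :
    innerF A (B - C) = innerF A B - innerF A C := by
  simp [innerF, Matrix.mul_sub]

lemma key_inner (X Z : Matrix (Fin n) (Fin r) ℝ) (hX : Xᵀ * X = 1) :
    innerF Z ((1 / 2 : ℝ) • (X * (Xᵀ * Z + Zᵀ * X)))
      = innerF ((1 / 2 : ℝ) • (X * (Xᵀ * Z + Zᵀ * X)))
          ((1 / 2 : ℝ) • (X * (Xᵀ * Z + Zᵀ * X))) := by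
  set S : Matrix (Fin r) (Fin r) ℝ := Xᵀ * Z + Zᵀ * X with hSdef
  have hS : Sᵀ = S := by
    simp [hSdef, Matrix.transpose_add, Matrix.transpose_mul]
    abel
  have h1 : innerF Z (X * S) = (Zᵀ * X * S).trace := by
    rw [innerF, Matrix.mul_assoc]
  have h2 : innerF (X * S) (X * S) = (S * S).trace := by
    rw [innerF, Matrix.transpose_mul, hS]
    rw [show S * Xᵀ * (X * S) = S * (Xᵀ * X * S) by
      rw [Matrix.mul_assoc S Xᵀ (X * S), ← Matrix.mul_assoc Xᵀ X S], hX]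
    simp
  have h3 : (S * S).trace = 2 * (Zᵀ * X * S).trace := by
    nth_rewrite 1 [hSdef]
    rw [Matrix.add_mul, Matrix.trace_add]
    have : (Xᵀ * Z * S).trace = (Zᵀ * X * S).trace := by
      rw [← Matrix.trace_transpose (Xᵀ * Z * S)]
      rw [Matrix.transpose_mul, Matrix.transpose_mul, Matrix.transpose_transpose, hS]
      rw [Matrix.trace_mul_comm]
    rw [this]; ring
  simp only [innerF, Matrix.transpose_smul, Matrix.smul_mul, Matrix.mul_smul,
    Matrix.trace_smul, smul_eq_mul, smul_smul]
  have h1' : (Zᵀ * (X * S)).trace = (Zᵀ * X * S).trace := by rw [Matrix.mul_assoc]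
  have h2' : ((X * S)ᵀ * (X * S)).trace = (S * S).trace := by
    have := h2; rwa [innerF] at this
  rw [h1', h2', h3]; ring

lemma projT_nonexpansive {X : Matrix (Fin n) (Fin r) ℝ} (hX : Xᵀ * X = 1)
    (Z : Matrix (Fin n) (Fin r) ℝ) : frob (projT X Z) ≤ frob Z := by
  set W : Matrix (Fin n) (Fin r) ℝ := (1 / 2 : ℝ) • (X * (Xᵀ * Z + Zᵀ * X)) with hW
  have hZW : innerF Z W = innerF W W := key_inner X Z hX
  have hexp : innerF (Z - W) (Z - W) = innerF Z Z - innerF W W := by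
    rw [innerF_sub_left, innerF_sub_right, innerF_sub_right, innerF_symm W Z, hZW]
    ring
  rw [frob_eq_sqrt_innerF, frob_eq_sqrt_innerF]
  apply Real.sqrt_le_sqrt
  show innerF (Z - W) (Z - W) ≤ innerF Z Z
  rw [hexp]
  linarith [innerF_self_nonneg W]

end Aux

/-- Lipschitz continuity of the Riemannian gradient on the Stiefel manifold.
If `φ` is differentiable with `L`-Lipschitz Euclidean gradient,
`L_n = max_{X ∈ St(n,r)} ‖∇φ(X)‖₂` and `L_G = L + 2L_n`, then for all `X, Y ∈ St(n,r)`,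
`‖grad φ(X) − grad φ(Y)‖_F ≤ L_G ‖X − Y‖_F`. -/
theorem riemannian_gradient_lipschitz {n r : ℕ}
    (φ : Matrix (Fin n) (Fin r) ℝ → ℝ) (L Ln LG : ℝ)
    (hdiff : Differentiable ℝ φ)
    (hLip : ∀ X Y : Matrix (Fin n) (Fin r) ℝ, frob (egrad φ X - egrad φ Y) ≤ L * frob (X - Y))
    (hLn : IsGreatest ((fun X => spec (egrad φ X)) '' Stiefel n r) Ln)
    (hLG : LG = L + 2 * Ln)
    (X Y : Matrix (Fin n) (Fin r) ℝ) (hX : X ∈ Stiefel n r) (hY : Y ∈ Stiefel n r) :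
    frob (rgrad φ X - rgrad φ Y) ≤ LG * frob (X - Y) := by
  have hX' : Xᵀ * X = 1 := hX
  have hY' : Yᵀ * Y = 1 := hY
  set G : Matrix (Fin n) (Fin r) ℝ := egrad φ Y with hGdef
  set D : Matrix (Fin n) (Fin r) ℝ := egrad φ X - egrad φ Y with hDdef
  set F : ℝ := frob (X - Y) with hF
  have hFnn : 0 ≤ F := frob_nonneg _
  -- spectral norm bounds
  have hG : spec G ≤ Ln := hLn.2 ⟨Y, hY, rfl⟩
  have hGT : spec Gᵀ ≤ Ln := le_trans (spec_transpose_le G) hG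
  have hLnnn : 0 ≤ Ln := le_trans (spec_nonneg G) hG
  have hsX : spec X ≤ 1 := spec_stiefel hX'
  have hsY : spec Y ≤ 1 := spec_stiefel hY'
  have hsXT : spec Xᵀ ≤ 1 := le_trans (spec_transpose_le X) hsX
  -- the decomposition
  have hdec : rgrad φ X - rgrad φ Y = projT X D +
      (-((1 / 2 : ℝ) • (((X - Y) * Xᵀ) * G + Y * ((X - Y)ᵀ * G)
        + ((X - Y) * Gᵀ) * X + Y * (Gᵀ * (X - Y))))) := by
    simp only [rgrad, projT, hDdef, hGdef, Matrix.transpose_sub, Matrix.mul_sub,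
      Matrix.sub_mul, Matrix.mul_add, Matrix.add_mul, Matrix.mul_assoc, smul_add, smul_sub,
      neg_smul, neg_add]
    module
  -- bounds for the four correction terms
  have t1 : frob (((X - Y) * Xᵀ) * G) ≤ Ln * F := by
    have b1 : frob ((X - Y) * Xᵀ) ≤ F := by
      calc frob ((X - Y) * Xᵀ) ≤ frob (X - Y) * spec Xᵀ := frob_mul_le_right _ _
        _ ≤ F * 1 := mul_le_mul_of_nonneg_left hsXT hFnn
        _ = F := mul_one _
    calc frob (((X - Y) * Xᵀ) * G) ≤ frob ((X - Y) * Xᵀ) * spec G := frob_mul_le_right _ _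
      _ ≤ F * Ln := mul_le_mul b1 hG (spec_nonneg _) hFnn
      _ = Ln * F := mul_comm _ _
  have t2 : frob (Y * ((X - Y)ᵀ * G)) ≤ Ln * F := by
    have b2 : frob ((X - Y)ᵀ * G) ≤ F * Ln := by
      calc frob ((X - Y)ᵀ * G) ≤ frob (X - Y)ᵀ * spec G := frob_mul_le_right _ _
        _ = F * spec G := by rw [frob_transpose]
        _ ≤ F * Ln := mul_le_mul_of_nonneg_left hG hFnn
    calc frob (Y * ((X - Y)ᵀ * G)) ≤ spec Y * frob ((X - Y)ᵀ * G) := frob_mul_le_left _ _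
      _ ≤ 1 * (F * Ln) := mul_le_mul hsY b2 (frob_nonneg _) zero_le_one
      _ = Ln * F := by ring
  have t3 : frob (((X - Y) * Gᵀ) * X) ≤ Ln * F := by
    have b3 : frob ((X - Y) * Gᵀ) ≤ F * Ln := by
      calc frob ((X - Y) * Gᵀ) ≤ frob (X - Y) * spec Gᵀ := frob_mul_le_right _ _
        _ ≤ F * Ln := mul_le_mul_of_nonneg_left hGT hFnn
    calc frob (((X - Y) * Gᵀ) * X) ≤ frob ((X - Y) * Gᵀ) * spec X := frob_mul_le_right _ _
      _ ≤ (F * Ln) * 1 := mul_le_mul b3 hsX (spec_nonneg _) (by positivity)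
      _ = Ln * F := by ring
  have t4 : frob (Y * (Gᵀ * (X - Y))) ≤ Ln * F := by
    have b4 : frob (Gᵀ * (X - Y)) ≤ Ln * F := by
      calc frob (Gᵀ * (X - Y)) ≤ spec Gᵀ * frob (X - Y) := frob_mul_le_left _ _
        _ ≤ Ln * F := mul_le_mul_of_nonneg_right hGT hFnn
    calc frob (Y * (Gᵀ * (X - Y))) ≤ spec Y * frob (Gᵀ * (X - Y)) := frob_mul_le_left _ _
      _ ≤ 1 * (Ln * F) := mul_le_mul hsY b4 (frob_nonneg _) zero_le_one
      _ = Ln * F := one_mul _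
  -- the sum of the four terms
  have hsum : frob (((X - Y) * Xᵀ) * G + Y * ((X - Y)ᵀ * G)
      + ((X - Y) * Gᵀ) * X + Y * (Gᵀ * (X - Y))) ≤ 4 * (Ln * F) := by
    calc frob (((X - Y) * Xᵀ) * G + Y * ((X - Y)ᵀ * G)
        + ((X - Y) * Gᵀ) * X + Y * (Gᵀ * (X - Y)))
        ≤ frob (((X - Y) * Xᵀ) * G + Y * ((X - Y)ᵀ * G) + ((X - Y) * Gᵀ) * X)
          + frob (Y * (Gᵀ * (X - Y))) := frob_add_le _ _
      _ ≤ (frob (((X - Y) * Xᵀ) * G + Y * ((X - Y)ᵀ * G)) + frob (((X - Y) * Gᵀ) * X))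
          + frob (Y * (Gᵀ * (X - Y))) := by
            exact add_le_add (frob_add_le _ _) le_rfl
      _ ≤ ((frob (((X - Y) * Xᵀ) * G) + frob (Y * ((X - Y)ᵀ * G))) + frob (((X - Y) * Gᵀ) * X))
          + frob (Y * (Gᵀ * (X - Y))) := by
            exact add_le_add (add_le_add (frob_add_le _ _) le_rfl) le_rfl
      _ ≤ 4 * (Ln * F) := by linarith
  -- the projected difference of gradients
  have hproj : frob (projT X D) ≤ L * F := le_trans (projT_nonexpansive hX' D) (hLip X Y)
  -- put it together
  calc frob (rgrad φ X - rgrad φ Y)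
      = frob (projT X D +
        (-((1 / 2 : ℝ) • (((X - Y) * Xᵀ) * G + Y * ((X - Y)ᵀ * G)
          + ((X - Y) * Gᵀ) * X + Y * (Gᵀ * (X - Y)))))) := by rw [hdec]
    _ ≤ frob (projT X D) +
        frob (-((1 / 2 : ℝ) • (((X - Y) * Xᵀ) * G + Y * ((X - Y)ᵀ * G)
          + ((X - Y) * Gᵀ) * X + Y * (Gᵀ * (X - Y))))) := frob_add_le _ _
    _ ≤ L * F + (1 / 2) * (4 * (Ln * F)) := by
        rw [frob_neg, frob_smul]
        refine add_le_add hproj ?_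
        rw [show |(1 / 2 : ℝ)| = 1 / 2 by norm_num]
        linarith
    _ = LG * F := by rw [hLG]; ring
  done


end
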